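/- For c > 1 and R ≥ 0, let α⁺(c) = (c-1)R/((c-1)² + c + (c-1)R). Then α⁺(c) ∈ [0,1), and the limiting relative loss R_GSE(c) = α⁺(c)² · (c²-c+1)/(c-1) + (1-α⁺(c))² R satisfies R_GSE(c) → R as c → 1⁺. -/

import Mathlib

open Filter Topology

/-- For `c > 1` and `R ≥ 0`, `α⁺(c) = (c-1)R/((c-1)²+c+(c-1)R) ∈ [0,1)`, and the
limiting relative loss `α⁺(c)²(c²-c+1)/(c-1) + (1-α⁺(c))²R → R` as `c → 1⁺`. -/
theorem alpha_plus_properties (R : ℝ) (hR : 0 ≤ R) :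
    let α : ℝ → ℝ := fun c => (c - 1) * R / ((c - 1) ^ 2 + c + (c - 1) * R)
    (∀ c : ℝ, 1 < c → α c ∈ Set.Ico (0 : ℝ) 1) ∧
    Tendsto (fun c => α c ^ 2 * ((c ^ 2 - c + 1) / (c - 1)) + (1 - α c) ^ 2 * R)
      (𝓝[>] 1) (𝓝 R) := by
  intro α
  have hD : ∀ c : ℝ, 1 < c → 0 < (c - 1) ^ 2 + c + (c - 1) * R := by
    intro c hc
    have : 0 ≤ (c - 1) * R := mul_nonneg (by linarith) hR
    nlinarith
  constructor
  · intro c hc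
    have hD' := hD c hc
    constructor
    · exact div_nonneg (mul_nonneg (by linarith) hR) hD'.le
    · rw [div_lt_one hD']
      nlinarith
  · have hα : Tendsto α (𝓝[>] (1:ℝ)) (𝓝 0) := by
      have hcα : ContinuousAt α 1 := by
        apply ContinuousAt.div
        · fun_prop
        · fun_prop
        · norm_num
      have h0 : α 1 = 0 := by simp [α]
      have := hcα.tendsto
      rw [h0] at this
      exact tendsto_nhdsWithin_of_tendsto_nhds this
    have hterm1 : Tendsto (fun c => α c ^ 2 * ((c ^ 2 - c + 1) / (c - 1)))
        (𝓝[>] (1:ℝ)) (𝓝 0) := by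
      have hcont : Tendsto (fun c : ℝ =>
          (c - 1) * R ^ 2 * (c ^ 2 - c + 1) / ((c - 1) ^ 2 + c + (c - 1) * R) ^ 2)
          (𝓝 1) (𝓝 0) := by
        have hc : ContinuousAt (fun c : ℝ =>
            (c - 1) * R ^ 2 * (c ^ 2 - c + 1) / ((c - 1) ^ 2 + c + (c - 1) * R) ^ 2) 1 := by
          apply ContinuousAt.div
          · fun_prop
          · fun_prop
          · norm_num
        have := hc.tendsto
        norm_num at this
        convert this using 2
      refine (tendsto_nhdsWithin_of_tendsto_nhds hcont).congr' ?_
      filter_upwards [self_mem_nhdsWithin] with c hc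
      have hc1 : (1:ℝ) < c := hc
      have hD' : ((c - 1) ^ 2 + c + (c - 1) * R) ≠ 0 := (hD c hc1).ne'
      have hne : c - 1 ≠ 0 := sub_ne_zero.mpr (ne_of_gt hc1)
      simp only [α]
      field_simp
    have hterm2 : Tendsto (fun c => (1 - α c) ^ 2 * R) (𝓝[>] (1:ℝ)) (𝓝 R) := by
      have h1 : Tendsto (fun c => (1:ℝ) - α c) (𝓝[>] (1:ℝ)) (𝓝 1) := by
        simpa using (tendsto_const_nhds (x := (1:ℝ))).sub hα
      have := (h1.pow 2).mul_const R
      simpa using this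
    have := hterm1.add hterm2
    simpa using this
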